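/- (Multiplication rule in Γ̃ modulo Γ′.) Assume n ≥ 1, m ≥ 0, 2n > d and m ≤ 2n + d − 1. For all t, t′ ∈ E^× and r, u ∈ O_E there exist ρ ∈ p_E^d and j ∈ I_E^{2m+1} such that i(t,r)·i(t′,u) = i(t·t′·(1 + π^{2n}ru), r + u)·i(1,ρ)·j. -/

import Mathlib

open Matrix

noncomputable section

namespace ADLV

variable {E : Type*} [Field E]

/-- `e₋(a)`, the lower unipotent matrix. -/
def em (a : E) : Matrix (Fin 2) (Fin 2) E := !![1, 0; a, 1]

/-- `e₊(a)`, the upper unipotent matrix. -/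
def ep (a : E) : Matrix (Fin 2) (Fin 2) E := !![1, a; 0, 1]

/-- `e₀(c, c')`, the diagonal matrix. -/
def e0 (c c' : E) : Matrix (Fin 2) (Fin 2) E := !![c, 0; 0, c']

/-- The congruence subgroup `I_E^r`, as a set of matrices. -/
def IEr (v : E → WithTop ℤ) (r : ℤ) : Set (Matrix (Fin 2) (Fin 2) E) :=
  {g | (((r + 1) / 2 : ℤ) : WithTop ℤ) ≤ v (g 0 0 - 1) ∧
    ((r / 2 : ℤ) : WithTop ℤ) ≤ v (g 0 1) ∧
    ((r / 2 + 1 : ℤ) : WithTop ℤ) ≤ v (g 1 0) ∧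
    (((r + 1) / 2 : ℤ) : WithTop ℤ) ≤ v (g 1 1 - 1)}

/-- The Iwahori subgroup `I_E`, as a set of matrices. -/
def IwE (v : E → WithTop ℤ) : Set (Matrix (Fin 2) (Fin 2) E) :=
  {g | v (g 0 0) = 0 ∧ (0 : WithTop ℤ) ≤ v (g 0 1) ∧
    (1 : WithTop ℤ) ≤ v (g 1 0) ∧ v (g 1 1) = 0}

/-- `P_r = 1 + εⁿ π^{2n} r τ(r)`. -/
def Pel (τ : E →+* E) (ε π : E) (n : ℤ) (r : E) : E := 1 + ε ^ n * π ^ (2 * n) * r * τ r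

/-- `i(t, r) = e₊(r) e₋(εⁿ π^{2n} τ(r) P_r⁻¹) e₀(t, τ(t) P_r⁻¹)`. -/
def imat (τ : E →+* E) (ε π : E) (n : ℤ) (t r : E) : Matrix (Fin 2) (Fin 2) E :=
  ep r * em (ε ^ n * π ^ (2 * n) * τ r * (Pel τ ε π n r)⁻¹) * e0 t (τ t * (Pel τ ε π n r)⁻¹)

/-- The element `ẇ`. -/
def wdot (ε π : E) (n : ℤ) : Matrix (Fin 2) (Fin 2) E :=
  !![0, π ^ (-n); π ^ n, 0] * e0 (ε ^ (n / 2)) (ε ^ (-((n + 1) / 2)))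

/-- The element `v̇`. -/
def vdot (π : E) (n d : ℤ) : Matrix (Fin 2) (Fin 2) E :=
  !![0, π ^ (-((d + 1) / 2 + (n + 1) / 2)); π ^ ((d + 1) / 2 + n / 2), 0]

/-- `ι(c₀ + c₁ π)`, the embedding of `E` into `Mat₂(F)` on the element `c₀ + c₁ π`, `c₀, c₁ ∈ F`. -/
def iota (Δ ϖ : E) (c₀ c₁ : E) : Matrix (Fin 2) (Fin 2) E := !![c₀ + Δ * c₁, c₁; ϖ * c₁, c₀]

section Aux

variable {E : Type*} [Field E] (v : E → WithTop ℤ)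

lemma vmul_ge (hv_mul : ∀ x y : E, v (x * y) = v x + v y) {x y : E} {a b : WithTop ℤ}
    (hx : a ≤ v x) (hy : b ≤ v y) : a + b ≤ v (x * y) := by
  rw [hv_mul]; exact add_le_add hx hy

lemma vadd_ge (hv_add : ∀ x y : E, min (v x) (v y) ≤ v (x + y)) {x y : E} {a : WithTop ℤ}
    (hx : a ≤ v x) (hy : a ≤ v y) : a ≤ v (x + y) :=
  le_trans (le_min hx hy) (hv_add x y)

lemma v_one (hv_top : ∀ x : E, v x = ⊤ ↔ x = 0)
    (hv_mul : ∀ x y : E, v (x * y) = v x + v y) : v 1 = 0 := by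
  have h := hv_mul 1 1
  rw [mul_one] at h
  cases hv1 : v (1 : E) with
  | top => exact absurd ((hv_top 1).1 hv1) one_ne_zero
  | coe a =>
      rw [hv1] at h
      have : a = a + a := by exact_mod_cast h
      have : a = 0 := by omega
      simp [this]

lemma v_ne_top (hv_top : ∀ x : E, v x = ⊤ ↔ x = 0) {x : E} (hx : x ≠ 0) : v x ≠ ⊤ :=
  fun h => hx ((hv_top x).1 h)

lemma v_zero (hv_top : ∀ x : E, v x = ⊤ ↔ x = 0) : v 0 = ⊤ := (hv_top 0).2 rfl

lemma v_sub_ge [CharP E 2] (hv_add : ∀ x y : E, min (v x) (v y) ≤ v (x + y)) {x y : E}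
    {a : WithTop ℤ} (hx : a ≤ v x) (hy : a ≤ v y) : a ≤ v (x - y) := by
  rw [sub_eq_add_neg, CharTwo.neg_eq]
  exact vadd_ge v hv_add hx hy

lemma v_add_eq_left [CharP E 2] (hv_add : ∀ x y : E, min (v x) (v y) ≤ v (x + y)) {x y : E}
    (h : v x < v y) : v (x + y) = v x := by
  refine le_antisymm ?_ (le_trans (le_of_eq (min_eq_left h.le).symm) (hv_add x y))
  by_contra hc
  push_neg at hc
  have hx : x = (x + y) + y := by
    rw [add_assoc, ← two_mul, (by exact_mod_cast (CharP.cast_eq_zero E 2) : (2:E) = 0)]; ring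
  have := vadd_ge v hv_add (x := x + y) (y := y) (a := min (v (x+y)) (v y))
    (min_le_left _ _) (min_le_right _ _)
  rw [← hx] at this
  exact absurd (lt_of_lt_of_le (lt_min hc h) this) (lt_irrefl _)

lemma v_one_add_eq_zero [CharP E 2] (hv_top : ∀ x : E, v x = ⊤ ↔ x = 0)
    (hv_mul : ∀ x y : E, v (x * y) = v x + v y)
    (hv_add : ∀ x y : E, min (v x) (v y) ≤ v (x + y)) {x : E} (h : 0 < v x) :
    v (1 + x) = 0 := by
  rw [v_add_eq_left v hv_add (by rw [v_one v hv_top hv_mul]; exact h)]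
  exact v_one v hv_top hv_mul

lemma v_pow_zero (hv_top : ∀ x : E, v x = ⊤ ↔ x = 0)
    (hv_mul : ∀ x y : E, v (x * y) = v x + v y) {x : E} (hx : v x = 0) (N : ℕ) :
    v (x ^ N) = 0 := by
  induction N with
  | zero => simp [v_one v hv_top hv_mul]
  | succ k ih => rw [pow_succ, hv_mul, ih, hx, add_zero]

lemma v_pow_one (hv_top : ∀ x : E, v x = ⊤ ↔ x = 0)
    (hv_mul : ∀ x y : E, v (x * y) = v x + v y) {x : E} (hx : v x = 1) (N : ℕ) :
    v (x ^ N) = (N : ℤ) := by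
  induction N with
  | zero => rw [pow_zero, v_one v hv_top hv_mul]; norm_cast
  | succ k ih =>
      rw [pow_succ, hv_mul, ih, hx]
      push_cast
      rfl

lemma v_sum_ge (hv_top : ∀ x : E, v x = ⊤ ↔ x = 0)
    (hv_add : ∀ x y : E, min (v x) (v y) ≤ v (x + y))
    {ι : Type*} (s : Finset ι) (f : ι → E) (h : ∀ i ∈ s, (0 : WithTop ℤ) ≤ v (f i)) :
    (0 : WithTop ℤ) ≤ v (∑ i ∈ s, f i) := by
  classical
  induction s using Finset.induction with
  | empty => simp [v_zero v hv_top]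
  | insert _ _ hni ih =>
      rw [Finset.sum_insert hni]
      exact vadd_ge v hv_add (h _ (Finset.mem_insert_self _ _))
        (ih fun i hi => h i (Finset.mem_insert_of_mem hi))

lemma v_geom [CharP E 2] (hv_top : ∀ x : E, v x = ⊤ ↔ x = 0)
    (hv_mul : ∀ x y : E, v (x * y) = v x + v y)
    (hv_add : ∀ x y : E, min (v x) (v y) ≤ v (x + y))
    {ε : E} (hε0 : v ε = 0) {d : WithTop ℤ} (hεd : d ≤ v (ε - 1)) (N : ℕ) :
    d ≤ v (ε ^ N - 1) := by
  have hg := geom_sum_mul ε N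
  calc d = 0 + d := (zero_add d).symm
  _ ≤ v ((∑ i ∈ Finset.range N, ε ^ i) * (ε - 1)) := by
      refine vmul_ge v hv_mul ?_ hεd
      exact v_sum_ge v hv_top hv_add _ _
        (fun i _ => le_of_eq (v_pow_zero v hv_top hv_mul hε0 i).symm)
  _ = v (ε ^ N - 1) := by rw [hg]

lemma key_tau [CharP E 2] (τ : E →+* E)
    (hv_top : ∀ x : E, v x = ⊤ ↔ x = 0)
    (hv_mul : ∀ x y : E, v (x * y) = v x + v y)
    (hv_add : ∀ x y : E, min (v x) (v y) ≤ v (x + y))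
    (π : E) (hπ : v π = 1)
    (hv_even : ∀ x : E, τ x = x → ∀ k : ℤ, v x = (k : WithTop ℤ) → Even k)
    (hbasis : ∀ y : E, ∃ c₀ c₁ : E, τ c₀ = c₀ ∧ τ c₁ = c₁ ∧ y = c₀ + c₁ * π)
    (d : ℤ)
    (ε : E) (hτπ : τ π = ε * π)
    (hεd : v (ε - 1) = (d : WithTop ℤ))
    (x : E) : v x + (d : WithTop ℤ) ≤ v (τ x - x) := by
  obtain ⟨c₀, c₁, hc₀, hc₁, hx⟩ := hbasis x
  have hsub : τ x - x = c₁ * ((ε - 1) * π) := by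
    rw [hx, map_add, _root_.map_mul, hc₀, hc₁, hτπ]; ring
  have hνsub : v (τ x - x) = v c₁ + ((d : WithTop ℤ) + 1) := by
    rw [hsub, hv_mul, hv_mul, hεd, hπ]
  have hc1π : v (c₁ * π) = v c₁ + 1 := by rw [hv_mul, hπ]
  have hle : v x ≤ v c₁ + 1 := by
    rcases lt_trichotomy (v c₀) (v (c₁ * π)) with h | h | h
    · rw [hx, v_add_eq_left v hv_add h]
      exact (h.trans_eq hc1π).le
    · rcases eq_or_ne (v c₀) ⊤ with htop | htop
      · have h0 : c₀ = 0 := (hv_top c₀).1 htop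
        have h1 : c₁ * π = 0 := (hv_top _).1 (h ▸ htop)
        have hπ0 : π ≠ 0 := fun hp => by simp [hp, v_zero v hv_top] at hπ
        have h1' : c₁ = 0 := by
          rcases mul_eq_zero.1 h1 with h' | h'
          · exact h'
          · exact absurd h' hπ0
        simp [hx, h0, h1', v_zero v hv_top]
      · cases hk : v c₀ with
        | top => exact absurd hk htop
        | coe k₀ =>
            have hev0 : Even k₀ := hv_even c₀ hc₀ k₀ hk
            have hc1top : v c₁ ≠ ⊤ := by
              intro hh
              rw [hc1π, hh] at h
              rw [hk] at h
              simp at h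
            cases hk1 : v c₁ with
            | top => exact absurd hk1 hc1top
            | coe k₁ =>
                have : (k₀ : WithTop ℤ) = (k₁ : WithTop ℤ) + 1 := by
                  rw [← hk, ← hk1, h, hc1π]
                have hkk : k₀ = k₁ + 1 := by exact_mod_cast this
                rcases hev0 with ⟨a, ha⟩
                rcases (hv_even c₁ hc₁ k₁ hk1) with ⟨b, hb⟩
                omega
    · have : v x = v (c₁ * π) := by
        rw [hx, add_comm]
        exact v_add_eq_left v hv_add h
      rw [this, hc1π]
  calc v x + (d : WithTop ℤ) ≤ (v c₁ + 1) + d := add_le_add hle le_rfl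
  _ = v (τ x - x) := by rw [hνsub, add_assoc, add_comm (1 : WithTop ℤ) (d : WithTop ℤ)]

/-- `i(t,r)` as scalar times a nice matrix.  -/
lemma imat_eq [CharP E 2] (τ : E →+* E) (ε π : E) (n : ℤ) (t r : E)
    (hP : Pel τ ε π n r ≠ 0) :
    imat τ ε π n t r = (Pel τ ε π n r)⁻¹ •
      !![t, r * τ t; (ε ^ n * π ^ (2*n)) * t * τ r, τ t] := by
  have h2 : (2 : E) = 0 := by exact_mod_cast (CharP.cast_eq_zero E 2)
  ext i j
  fin_cases i <;> fin_cases j <;>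
    simp [imat, ep, em, e0, Matrix.mul_apply, Fin.sum_univ_two]
  · field_simp
    rcases eq_or_ne t 0 with h | h
    · right; exact h
    · left; simp only [Pel]; linear_combination (ε ^ n * π ^ (2*n) * r * τ r) * h2
  · field_simp
  · field_simp
  · ring

lemma prod_smul_eq (P3 P4 P1 P2 c : E) (N1 N2 N3 N4 : Matrix (Fin 2) (Fin 2) E)
    (h : P1⁻¹ * P2⁻¹ * (c * (N1 * N2).det) = P3⁻¹ * P4⁻¹) :
    (P3⁻¹ • N3) * (P4⁻¹ • N4) =
      (P1⁻¹ • N1) * (P2⁻¹ • N2) * (c • ((N1 * N2).adjugate * (N3 * N4))) := by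
  simp only [Matrix.smul_mul, Matrix.mul_smul, smul_smul]
  rw [← Matrix.mul_assoc (N1 * N2), Matrix.mul_adjugate, Matrix.smul_mul, Matrix.one_mul,
    smul_smul]
  congr 1
  linear_combination -h

lemma j_decomp (c : E) (U V : Matrix (Fin 2) (Fin 2) E) :
    c • (U.adjugate * V) =
      (c * U.det) • (1 : Matrix (Fin 2) (Fin 2) E) + c • (U.adjugate * (V - U)) := by
  rw [Matrix.mul_sub, Matrix.adjugate_mul, smul_sub, smul_smul]
  abel

end Aux

set_option maxHeartbeats 1000000 in
theorem statement6 [CharP E 2]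
    (τ : E →+* E) (hττ : ∀ x : E, τ (τ x) = x) (hτne : τ ≠ RingHom.id E)
    (v : E → WithTop ℤ)
    (hv_top : ∀ x : E, v x = ⊤ ↔ x = 0)
    (hv_mul : ∀ x y : E, v (x * y) = v x + v y)
    (hv_add : ∀ x y : E, min (v x) (v y) ≤ v (x + y))
    (hv_tau : ∀ x : E, v (τ x) = v x)
    (π : E) (hπ : v π = 1)
    (hv_even : ∀ x : E, τ x = x → ∀ k : ℤ, v x = (k : WithTop ℤ) → Even k)
    (hbasis : ∀ y : E, ∃ c₀ c₁ : E, τ c₀ = c₀ ∧ τ c₁ = c₁ ∧ y = c₀ + c₁ * π)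
    (d : ℤ) (hd : 0 < d) (hdodd : Odd d)
    (ε : E) (hε : ε = τ π / π)
    (hεd : v (ε - 1) = (d : WithTop ℤ))
    (n m : ℤ) (hn : 1 ≤ n) (hm : 0 ≤ m) (h2n : d < 2 * n) (hmb : m ≤ 2 * n + d - 1)
    (t t' : E) (ht : t ≠ 0) (ht' : t' ≠ 0)
    (r u : E) (hr : (0 : WithTop ℤ) ≤ v r) (hu : (0 : WithTop ℤ) ≤ v u) :
    ∃ ρ : E, (d : WithTop ℤ) ≤ v ρ ∧ ∃ j ∈ IEr v (2 * m + 1),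
      imat τ ε π n t r * imat τ ε π n t' u =
        imat τ ε π n (t * t' * (1 + π ^ (2 * n) * r * u)) (r + u) * imat τ ε π n 1 ρ * j := by
  classical
  have h2 : (2 : E) = 0 := by exact_mod_cast (CharP.cast_eq_zero E 2)
  have hπ0 : π ≠ 0 := fun hp => by simp [hp, v_zero v hv_top] at hπ
  have hτπ : τ π = ε * π := by rw [hε]; field_simp
  have hε0 : ε ≠ 0 := by
    intro h
    rw [h, zero_mul] at hτπ
    have : π = 0 := by rw [← hττ π, hτπ, map_zero]
    exact hπ0 this
  have hvε : v ε = 0 := by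
    have h1 : v (ε * π) = v ε + v π := hv_mul ε π
    rw [← hτπ, hv_tau, hπ] at h1
    cases hve : v ε with
    | top => rw [hve] at h1; simp at h1
    | coe a =>
        rw [hve] at h1
        have ha : a = 0 := by
          have : (1 : ℤ) = a + 1 := by exact_mod_cast h1
          omega
        exact_mod_cast ha
  -- natural number exponent
  obtain ⟨N, hN⟩ : ∃ N : ℕ, n = (N : ℤ) := ⟨n.toNat, by omega⟩
  have hvB : v (π ^ (2 * n)) = ((2 * n : ℤ) : WithTop ℤ) := by
    have h1 : (2 * n) = ((2 * N : ℕ) : ℤ) := by omega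
    rw [h1, zpow_natCast, v_pow_one v hv_top hv_mul hπ]
  have hveps : v (ε ^ n) = 0 := by
    rw [hN, zpow_natCast]; exact v_pow_zero v hv_top hv_mul hvε N
  have hepsd : (d : WithTop ℤ) ≤ v (ε ^ n - 1) := by
    rw [hN, zpow_natCast]
    exact v_geom v hv_top hv_mul hv_add hvε (le_of_eq hεd.symm) N
  have heps2 : ε ^ (2 * n) = ε ^ n * ε ^ n := by
    rw [two_mul, zpow_add₀ hε0]
  have hτB : τ (π ^ (2 * n)) = (ε ^ n * ε ^ n) * π ^ (2 * n) := by
    rw [map_zpow₀, hτπ, mul_zpow, ← heps2]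
  have hkey : ∀ x : E, v x + (d : WithTop ℤ) ≤ v (τ x - x) :=
    key_tau v τ hv_top hv_mul hv_add π hπ hv_even hbasis d ε hτπ hεd
  have hvτsub : ∀ x : E, (0 : WithTop ℤ) ≤ v x → (d : WithTop ℤ) ≤ v (τ x - x) := by
    intro x hx
    calc (d : WithTop ℤ) = 0 + (d : WithTop ℤ) := (zero_add _).symm
    _ ≤ v x + d := add_le_add hx le_rfl
    _ ≤ _ := hkey x
  -- Pel valuations
  have hPel0 : ∀ x : E, (0 : WithTop ℤ) ≤ v x → v (Pel τ ε π n x) = 0 := by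
    intro x hx
    have hτx : (0 : WithTop ℤ) ≤ v (τ x) := by rw [hv_tau]; exact hx
    have h1 : (((0 : ℤ) + (2 * n : ℤ)) + (0 : WithTop ℤ)) + (0 : WithTop ℤ)
        ≤ v (ε ^ n * π ^ (2 * n) * x * τ x) :=
      vmul_ge v hv_mul (vmul_ge v hv_mul
        (vmul_ge v hv_mul (le_of_eq hveps.symm) (le_of_eq hvB.symm)) hx) hτx
    have h2' : (0 : WithTop ℤ) < v (ε ^ n * π ^ (2 * n) * x * τ x) := by
      refine lt_of_lt_of_le ?_ h1
      have : ((0 : ℤ) : WithTop ℤ) < (((0 : ℤ) + (2 * n : ℤ) : ℤ) : WithTop ℤ) := by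
        exact_mod_cast (by omega : (0 : ℤ) < 0 + 2 * n)
      simpa using this
    exact v_one_add_eq_zero v hv_top hv_mul hv_add h2'
  have hPelne : ∀ x : E, (0 : WithTop ℤ) ≤ v x → Pel τ ε π n x ≠ 0 := by
    intro x hx h0
    have := hPel0 x hx
    rw [h0, v_zero v hv_top] at this
    exact absurd this (by simp)
  have hru : (0 : WithTop ℤ) ≤ v (r + u) := vadd_ge v hv_add hr hu
  -- T and its valuation
  have h1g : v (1 + π ^ (2 * n) * r * u) = 0 := by
    refine v_one_add_eq_zero v hv_top hv_mul hv_add ?_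
    have h1 : (((2 * n : ℤ) : WithTop ℤ) + 0) + 0 ≤ v (π ^ (2 * n) * r * u) :=
      vmul_ge v hv_mul (vmul_ge v hv_mul (le_of_eq hvB.symm) hr) hu
    refine lt_of_lt_of_le ?_ h1
    simpa using (by exact_mod_cast (by omega : (0:ℤ) < 2*n) : ((0:ℤ) : WithTop ℤ) < ((2*n : ℤ) : WithTop ℤ))
  have h1g0 : (1 + π ^ (2 * n) * r * u) ≠ 0 := by
    intro h0
    have := h1g; rw [h0, v_zero v hv_top] at this; exact absurd this (by simp)
  obtain ⟨at1, hat1⟩ : ∃ k : ℤ, v t = (k : WithTop ℤ) :=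
    Option.ne_none_iff_exists'.mp (v_ne_top v hv_top ht)
  obtain ⟨at2, hat2⟩ : ∃ k : ℤ, v t' = (k : WithTop ℤ) :=
    Option.ne_none_iff_exists'.mp (v_ne_top v hv_top ht')
  obtain ⟨T, hT⟩ : ∃ x : E, x = t * t' * (1 + π ^ (2 * n) * r * u) := ⟨_, rfl⟩
  have hT0 : T ≠ 0 := by rw [hT]; exact mul_ne_zero (mul_ne_zero ht ht') h1g0
  have hvT : v T = ((at1 + at2 : ℤ) : WithTop ℤ) := by
    rw [hT, hv_mul, hv_mul, hat1, hat2, h1g, add_zero]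
    push_cast
    try abel
  have hvτT : v (τ T) = ((at1 + at2 : ℤ) : WithTop ℤ) := by rw [hv_tau]; exact hvT
  have hτT0 : τ T ≠ 0 := by
    intro h0
    have := hvτT; rw [h0, v_zero v hv_top] at this
    exact WithTop.top_ne_coe this
  have hτT : τ T = τ t * τ t' * (1 + (ε ^ n * ε ^ n * π ^ (2 * n)) * τ r * τ u) := by
    rw [hT]
    simp only [_root_.map_mul, map_add, _root_.map_one, hτB]
    try ring
  -- the element ρ
  obtain ⟨NUM, hNUM⟩ : ∃ x : E, x = τ t' * (t * u + r * τ t) + (r + u) * τ T := ⟨_, rfl⟩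
  obtain ⟨ρ, hρ⟩ : ∃ x : E, x = NUM * T⁻¹ := ⟨_, rfl⟩
  have hρT : ρ * T = NUM := by rw [hρ]; field_simp
  have hNUMeq : NUM = τ t' * (u * (t - τ t) + (r + u) * τ t * ((ε ^ n * ε ^ n * π ^ (2 * n)) * τ r * τ u)) := by
    rw [hNUM, hτT]
    linear_combination (τ t' * τ t * (r + u)) * h2
  have hvNUM : ((at1 + at2 + d : ℤ) : WithTop ℤ) ≤ v NUM := by
    rw [hNUMeq]
    have hsub1 : ((at1 + d : ℤ) : WithTop ℤ) ≤ v (t - τ t) := by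
      have hswap : t - τ t = τ t - t := by linear_combination (t - τ t) * h2
      rw [hswap]
      refine le_trans (le_of_eq ?_) (hkey t)
      rw [hat1]; push_cast; try abel
    have hx1 : ((0 : ℤ) : WithTop ℤ) + ((at1 + d : ℤ) : WithTop ℤ) ≤ v (u * (t - τ t)) :=
      vmul_ge v hv_mul hu hsub1
    have hx2 : (((0:ℤ) : WithTop ℤ) + ((at1 : ℤ) : WithTop ℤ)) + (((((0:ℤ) : WithTop ℤ) + ((0:ℤ) : WithTop ℤ) + ((2*n : ℤ) : WithTop ℤ)) + 0) + 0)
        ≤ v ((r + u) * τ t * (ε ^ n * ε ^ n * π ^ (2 * n) * τ r * τ u)) := by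
      refine vmul_ge v hv_mul (vmul_ge v hv_mul hru (le_of_eq ?_)) (vmul_ge v hv_mul (vmul_ge v hv_mul (vmul_ge v hv_mul (vmul_ge v hv_mul (le_of_eq hveps.symm) (le_of_eq hveps.symm)) (le_of_eq hvB.symm)) ?_) ?_)
      · rw [hv_tau, hat1]
      · rw [hv_tau]; exact hr
      · rw [hv_tau]; exact hu
    have hinner : ((at1 + d : ℤ) : WithTop ℤ) ≤
        v (u * (t - τ t) + (r + u) * τ t * (ε ^ n * ε ^ n * π ^ (2 * n) * τ r * τ u)) := by
      refine vadd_ge v hv_add (le_trans (le_of_eq ?_) hx1) (le_trans ?_ hx2)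
      · push_cast
        try abel
        try simp
      · calc ((at1 + d : ℤ) : WithTop ℤ) ≤ ((at1 + 2 * n : ℤ) : WithTop ℤ) := by
              exact_mod_cast (by omega : (at1 + d : ℤ) ≤ at1 + 2 * n)
        _ = _ := by push_cast; abel
    calc ((at1 + at2 + d : ℤ) : WithTop ℤ)
        = ((at2 : ℤ) : WithTop ℤ) + ((at1 + d : ℤ) : WithTop ℤ) := by push_cast; abel
    _ ≤ _ := vmul_ge v hv_mul
        (le_of_eq (by rw [hv_tau, hat2]) : ((at2:ℤ) : WithTop ℤ) ≤ v (τ t')) hinner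
  have hvρ : (d : WithTop ℤ) ≤ v ρ := by
    have hsum : v ρ + v T = v NUM := by rw [← hv_mul, hρT]
    cases hvρ' : v ρ with
    | top => exact le_top
    | coe k =>
        rw [hvρ', hvT] at hsum
        have hcoe : ((k + (at1 + at2) : ℤ) : WithTop ℤ) = v NUM := by
          rw [← hsum]; push_cast; try abel
        rw [← hcoe] at hvNUM
        have hdk : (at1 + at2 + d : ℤ) ≤ k + (at1 + at2) := by exact_mod_cast hvNUM
        exact_mod_cast (by omega : (d : ℤ) ≤ k)
  have hvρ0 : (0 : WithTop ℤ) ≤ v ρ :=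
    le_trans (by exact_mod_cast hd.le) hvρ
  -- nonvanishing of the Pel's
  have hPrne : Pel τ ε π n r ≠ 0 := hPelne r hr
  have hPune : Pel τ ε π n u ≠ 0 := hPelne u hu
  have hPrune : Pel τ ε π n (r + u) ≠ 0 := hPelne (r + u) hru
  have hPρne : Pel τ ε π n ρ ≠ 0 := hPelne ρ hvρ0
  refine ⟨ρ, hvρ, ?_⟩
  -- the matrices
  obtain ⟨N1, hN1⟩ : ∃ M : Matrix (Fin 2) (Fin 2) E,
    M = !![T, (r + u) * τ T; (ε ^ n * π ^ (2*n)) * T * τ (r + u), τ T] := ⟨_, rfl⟩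
  obtain ⟨N2, hN2⟩ : ∃ M : Matrix (Fin 2) (Fin 2) E,
    M = !![(1 : E), ρ * τ 1; (ε ^ n * π ^ (2*n)) * 1 * τ ρ, τ 1] := ⟨_, rfl⟩
  obtain ⟨N3, hN3⟩ : ∃ M : Matrix (Fin 2) (Fin 2) E,
    M = !![t, r * τ t; (ε ^ n * π ^ (2*n)) * t * τ r, τ t] := ⟨_, rfl⟩
  obtain ⟨N4, hN4⟩ : ∃ M : Matrix (Fin 2) (Fin 2) E,
    M = !![t', u * τ t'; (ε ^ n * π ^ (2*n)) * t' * τ u, τ t'] := ⟨_, rfl⟩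
  obtain ⟨c, hc⟩ : ∃ x : E, x = (Pel τ ε π n r * Pel τ ε π n u * T * τ T)⁻¹ := ⟨_, rfl⟩
  have hdet1 : N1.det = T * τ T * Pel τ ε π n (r + u) := by
    rw [hN1, Matrix.det_fin_two_of]
    simp only [Pel]
    linear_combination (-(ε ^ n * π ^ (2*n) * (r+u) * τ (r+u) * T * τ T)) * h2
  have hdet2 : N2.det = Pel τ ε π n ρ := by
    rw [hN2, Matrix.det_fin_two_of]
    simp only [_root_.map_one, Pel]
    linear_combination (-(ε ^ n * π ^ (2*n) * ρ * τ ρ)) * h2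
  refine ⟨c • ((N1 * N2).adjugate * (N3 * N4)), ?_, ?_⟩
  · -- membership in the congruence subgroup
    have bt' : ((at2:ℤ) : WithTop ℤ) ≤ v t' := le_of_eq hat2.symm
    have bτt : ((at1:ℤ) : WithTop ℤ) ≤ v (τ t) := by rw [hv_tau]; exact le_of_eq hat1.symm
    have bτt' : ((at2:ℤ) : WithTop ℤ) ≤ v (τ t') := by rw [hv_tau]; exact le_of_eq hat2.symm
    have bτr : (0 : WithTop ℤ) ≤ v (τ r) := by rw [hv_tau]; exact hr
    have bτu : (0 : WithTop ℤ) ≤ v (τ u) := by rw [hv_tau]; exact hu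
    have bτρ : ((d:ℤ):WithTop ℤ) ≤ v (τ ρ) := by rw [hv_tau]; exact hvρ
    have bτru : (0 : WithTop ℤ) ≤ v (τ (r + u)) := by rw [hv_tau]; exact hru
    have bT : ((at1+at2 : ℤ):WithTop ℤ) ≤ v T := le_of_eq hvT.symm
    have bτT : ((at1+at2 : ℤ):WithTop ℤ) ≤ v (τ T) := le_of_eq hvτT.symm
    have beps : (0:WithTop ℤ) ≤ v (ε ^ n) := le_of_eq hveps.symm
    have bB : ((2*n:ℤ):WithTop ℤ) ≤ v (π ^ (2*n)) := le_of_eq hvB.symm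
    have btu : ((at1:ℤ):WithTop ℤ) ≤ v (t * u) := by
      rw [hv_mul, hat1]; exact le_add_of_nonneg_right hu
    have hbτtu : ((at1 + d : ℤ):WithTop ℤ) ≤ v (τ (t * u) - t * u) := by
      refine le_trans ?_ (hkey (t * u))
      calc ((at1 + d : ℤ):WithTop ℤ) = ((at1:ℤ):WithTop ℤ) + ((d:ℤ):WithTop ℤ) := by
            push_cast; try abel
      _ ≤ v (t * u) + ((d:ℤ):WithTop ℤ) := add_le_add btu le_rfl
    -- entries of U = N1 * N2
    have hU00 : (N1 * N2) 0 0 = T + (r + u) * τ T * (ε ^ n * π ^ (2*n) * τ ρ) := by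
      rw [hN1, hN2]; simp [Matrix.mul_apply, Fin.sum_univ_two]; try ring
    have hU01 : (N1 * N2) 0 1 = T * ρ + (r + u) * τ T := by
      rw [hN1, hN2]; simp [Matrix.mul_apply, Fin.sum_univ_two]; try ring
    have hU10 : (N1 * N2) 1 0 = ε ^ n * π ^ (2*n) * T * τ (r + u) + τ T * (ε ^ n * π ^ (2*n) * τ ρ) := by
      rw [hN1, hN2]; simp [Matrix.mul_apply, Fin.sum_univ_two]; try ring
    have hU11 : (N1 * N2) 1 1 = ε ^ n * π ^ (2*n) * T * τ (r + u) * ρ + τ T := by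
      rw [hN1, hN2]; simp [Matrix.mul_apply, Fin.sum_univ_two]; try ring
    -- entries of V = N3 * N4
    have hV00 : (N3 * N4) 0 0 = t * t' + r * τ t * (ε ^ n * π ^ (2*n) * t' * τ u) := by
      rw [hN3, hN4]; simp [Matrix.mul_apply, Fin.sum_univ_two]; try ring
    have hV01 : (N3 * N4) 0 1 = t * (u * τ t') + r * τ t * τ t' := by
      rw [hN3, hN4]; simp [Matrix.mul_apply, Fin.sum_univ_two]; try ring
    have hV10 : (N3 * N4) 1 0 = ε ^ n * π ^ (2*n) * t * τ r * t' + τ t * (ε ^ n * π ^ (2*n) * t' * τ u) := by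
      rw [hN3, hN4]; simp [Matrix.mul_apply, Fin.sum_univ_two]; try ring
    have hV11 : (N3 * N4) 1 1 = ε ^ n * π ^ (2*n) * t * τ r * (u * τ t') + τ t * τ t' := by
      rw [hN3, hN4]; simp [Matrix.mul_apply, Fin.sum_univ_two]; try ring
    -- the entries of V - U
    have hW01 : (N3 * N4) 0 1 - (N1 * N2) 0 1 = 0 := by
      rw [hV01, hU01]
      have hρTex : ρ * T = τ t' * (t * u + r * τ t) + (r + u) * τ T := by rw [hρT, hNUM]
      linear_combination (-1 : E) * hρTex + (-((r+u) * τ T)) * h2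
    have hW00e : (N3 * N4) 0 0 - (N1 * N2) 0 0
        = π ^ (2*n) * r * t' * ((ε ^ n - 1) * (τ t * τ u) + (τ (t * u) - t * u))
          - ε ^ n * π ^ (2*n) * (r + u) * τ T * τ ρ := by
      rw [hV00, hU00, _root_.map_mul]
      linear_combination (-1 : E) * hT
    have hW11e : (N3 * N4) 1 1 - (N1 * N2) 1 1
        = ε ^ n * π ^ (2*n) * τ r * τ t' * ((t * u - τ (t * u)) - (ε ^ n - 1) * (τ t * τ u))
          - ε ^ n * π ^ (2*n) * T * τ (r + u) * ρ := by
      rw [hV11, hU11, _root_.map_mul]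
      linear_combination (-1 : E) * hτT
    have hW10e : (N3 * N4) 1 0 - (N1 * N2) 1 0
        = ε ^ n * π ^ (2*n) * (t' * τ u * (τ t - t) - t * t' * (π ^ (2*n) * r * u) * (τ r + τ u)
          - τ T * τ ρ) := by
      rw [hV10, hU10, map_add]
      linear_combination (-(ε ^ n * π ^ (2*n)) * (τ r + τ u)) * hT
    -- lower bounds for the entries of V - U
    have hbeps1 : ((at1 + d : ℤ):WithTop ℤ) ≤ v ((ε ^ n - 1) * (τ t * τ u)) := by
      refine le_trans ?_ (vmul_ge v hv_mul hepsd (vmul_ge v hv_mul bτt bτu))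
      norm_cast <;> omega
    have hbW00 : ((at1 + at2 + (2*n + d) : ℤ):WithTop ℤ) ≤ v ((N3 * N4) 0 0 - (N1 * N2) 0 0) := by
      rw [hW00e]
      refine v_sub_ge v hv_add ?_ ?_
      · refine le_trans ?_ (vmul_ge v hv_mul (vmul_ge v hv_mul (vmul_ge v hv_mul bB hr) bt')
          (vadd_ge v hv_add hbeps1 hbτtu))
        norm_cast <;> omega
      · refine le_trans ?_ (vmul_ge v hv_mul (vmul_ge v hv_mul (vmul_ge v hv_mul
          (vmul_ge v hv_mul beps bB) hru) bτT) bτρ)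
        norm_cast <;> omega
    have hbW11 : ((at1 + at2 + (2*n + d) : ℤ):WithTop ℤ) ≤ v ((N3 * N4) 1 1 - (N1 * N2) 1 1) := by
      rw [hW11e]
      refine v_sub_ge v hv_add ?_ ?_
      · have hsw : t * u - τ (t * u) = τ (t * u) - t * u := by
          linear_combination (t * u - τ (t * u)) * h2
        refine le_trans ?_ (vmul_ge v hv_mul (vmul_ge v hv_mul (vmul_ge v hv_mul
          (vmul_ge v hv_mul beps bB) bτr) bτt')
          (v_sub_ge v hv_add (by rw [hsw]; exact hbτtu) hbeps1))
        norm_cast <;> omega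
      · refine le_trans ?_ (vmul_ge v hv_mul (vmul_ge v hv_mul (vmul_ge v hv_mul
          (vmul_ge v hv_mul beps bB) bT) bτru) hvρ)
        norm_cast <;> omega
    have hbW10 : ((at1 + at2 + (2*n + d) : ℤ):WithTop ℤ) ≤ v ((N3 * N4) 1 0 - (N1 * N2) 1 0) := by
      rw [hW10e]
      have hbτt2 : ((at1 + d : ℤ):WithTop ℤ) ≤ v (τ t - t) := by
        refine le_trans (le_of_eq ?_) (hkey t)
        rw [hat1]; push_cast; try abel
      have hin : ((at1 + at2 + d : ℤ):WithTop ℤ) ≤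
          v (t' * τ u * (τ t - t) - t * t' * (π ^ (2*n) * r * u) * (τ r + τ u) - τ T * τ ρ) := by
        refine v_sub_ge v hv_add (v_sub_ge v hv_add ?_ ?_) ?_
        · refine le_trans ?_ (vmul_ge v hv_mul (vmul_ge v hv_mul bt' bτu) hbτt2)
          norm_cast <;> omega
        · refine le_trans ?_ (vmul_ge v hv_mul (vmul_ge v hv_mul (vmul_ge v hv_mul
            (le_of_eq hat1.symm) bt') (vmul_ge v hv_mul (vmul_ge v hv_mul bB hr) hu))
            (vadd_ge v hv_add bτr bτu))
          norm_cast <;> omega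
        · refine le_trans ?_ (vmul_ge v hv_mul bτT bτρ)
          norm_cast <;> omega
      refine le_trans ?_ (vmul_ge v hv_mul (vmul_ge v hv_mul beps bB) hin)
      norm_cast <;> omega
    have hbW01 : ((at1 + at2 + (2*n + d) : ℤ):WithTop ℤ) ≤ v ((N3 * N4) 0 1 - (N1 * N2) 0 1) := by
      rw [hW01, v_zero v hv_top]; exact le_top
    -- lower bounds for entries of U
    have hbU00 : ((at1 + at2 : ℤ):WithTop ℤ) ≤ v ((N1 * N2) 0 0) := by
      rw [hU00]
      refine vadd_ge v hv_add bT (le_trans ?_ (vmul_ge v hv_mul (vmul_ge v hv_mul hru bτT)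
        (vmul_ge v hv_mul (vmul_ge v hv_mul beps bB) bτρ)))
      norm_cast <;> omega
    have hbU01 : ((at1 + at2 : ℤ):WithTop ℤ) ≤ v ((N1 * N2) 0 1) := by
      rw [hU01]
      refine vadd_ge v hv_add (le_trans ?_ (vmul_ge v hv_mul bT hvρ))
        (le_trans ?_ (vmul_ge v hv_mul hru bτT))
      · norm_cast <;> omega
      · norm_cast <;> omega
    have hbU10 : ((at1 + at2 : ℤ):WithTop ℤ) ≤ v ((N1 * N2) 1 0) := by
      rw [hU10]
      refine vadd_ge v hv_add (le_trans ?_ (vmul_ge v hv_mul (vmul_ge v hv_mul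
        (vmul_ge v hv_mul beps bB) bT) bτru)) (le_trans ?_ (vmul_ge v hv_mul bτT
        (vmul_ge v hv_mul (vmul_ge v hv_mul beps bB) bτρ)))
      · norm_cast <;> omega
      · norm_cast <;> omega
    have hbU11 : ((at1 + at2 : ℤ):WithTop ℤ) ≤ v ((N1 * N2) 1 1) := by
      rw [hU11]
      refine vadd_ge v hv_add (le_trans ?_ (vmul_ge v hv_mul (vmul_ge v hv_mul (vmul_ge v hv_mul
        (vmul_ge v hv_mul beps bB) bT) bτru) hvρ)) bτT
      norm_cast <;> omega
    -- the scalar c * det - 1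
    have hC1 : c * (N1 * N2).det - 1
        = (Pel τ ε π n (r+u) * Pel τ ε π n ρ - Pel τ ε π n r * Pel τ ε π n u)
          * (Pel τ ε π n r * Pel τ ε π n u)⁻¹ := by
      rw [Matrix.det_mul, hdet1, hdet2, hc]
      field_simp
    have hDe : Pel τ ε π n (r+u) * Pel τ ε π n ρ - Pel τ ε π n r * Pel τ ε π n u
        = ε ^ n * π ^ (2*n) * (τ (r * τ u) - r * τ u)
          - (ε ^ n * π ^ (2*n)) * (ε ^ n * π ^ (2*n)) * (r * u * τ r * τ u)
          + ε ^ n * π ^ (2*n) * ρ * τ ρ * (Pel τ ε π n (r+u)) := by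
      simp only [Pel, map_add, _root_.map_mul, hττ]
      linear_combination (ε ^ n * π ^ (2*n) * r * τ u) * h2
    have hbrτu : (0 : WithTop ℤ) ≤ v (r * τ u) := by
      refine le_trans ?_ (vmul_ge v hv_mul hr bτu); norm_cast
    have hvD : ((2*n + d : ℤ):WithTop ℤ) ≤
        v (Pel τ ε π n (r+u) * Pel τ ε π n ρ - Pel τ ε π n r * Pel τ ε π n u) := by
      rw [hDe]
      refine vadd_ge v hv_add (v_sub_ge v hv_add ?_ ?_) ?_
      · refine le_trans ?_ (vmul_ge v hv_mul (vmul_ge v hv_mul beps bB) (hvτsub _ hbrτu))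
        norm_cast <;> omega
      · refine le_trans ?_ (vmul_ge v hv_mul (vmul_ge v hv_mul (vmul_ge v hv_mul beps bB)
          (vmul_ge v hv_mul beps bB)) (vmul_ge v hv_mul (vmul_ge v hv_mul
          (vmul_ge v hv_mul hr hu) bτr) bτu))
        norm_cast <;> omega
      · refine le_trans ?_ (vmul_ge v hv_mul (vmul_ge v hv_mul (vmul_ge v hv_mul
          (vmul_ge v hv_mul beps bB) hvρ) bτρ) (le_of_eq (hPel0 (r+u) hru).symm))
        norm_cast <;> omega
    have hPinv : v ((Pel τ ε π n r * Pel τ ε π n u)⁻¹) = 0 := by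
      have hone : (Pel τ ε π n r * Pel τ ε π n u)⁻¹ * (Pel τ ε π n r * Pel τ ε π n u) = 1 :=
        inv_mul_cancel₀ (mul_ne_zero hPrne hPune)
      have h' := congrArg v hone
      rw [hv_mul, v_one v hv_top hv_mul, hv_mul, hPel0 r hr, hPel0 u hu] at h'
      simpa using h'
    have hlam : ((2*n + d : ℤ):WithTop ℤ) ≤ v (c * (N1 * N2).det - 1) := by
      rw [hC1]
      refine le_trans ?_ (vmul_ge v hv_mul hvD (le_of_eq hPinv.symm))
      norm_cast <;> omega
    -- valuation of c
    have hvc : v c = ((-(at1+at2) - (at1+at2) : ℤ) : WithTop ℤ) := by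
      have hone : c * (Pel τ ε π n r * Pel τ ε π n u * T * τ T) = 1 := by
        rw [hc]
        exact inv_mul_cancel₀
          (mul_ne_zero (mul_ne_zero (mul_ne_zero hPrne hPune) hT0) hτT0)
      have h' := congrArg v hone
      rw [hv_mul, v_one v hv_top hv_mul, hv_mul, hv_mul, hv_mul, hPel0 r hr, hPel0 u hu,
        hvT, hvτT] at h'
      cases hvc' : v c with
      | top => rw [hvc'] at h'; simp at h'
      | coe k =>
          rw [hvc'] at h'
          have : k + (0 + 0 + (at1 + at2) + (at1 + at2)) = 0 := by exact_mod_cast h'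
          have hk : k = -(at1+at2) - (at1+at2) := by omega
          rw [hk]
    -- entries of adj U * (V - U)
    have hM00 : ((N1 * N2).adjugate * ((N3 * N4) - (N1 * N2))) 0 0
        = (N1 * N2) 1 1 * ((N3 * N4) 0 0 - (N1 * N2) 0 0)
          - (N1 * N2) 0 1 * ((N3 * N4) 1 0 - (N1 * N2) 1 0) := by
      rw [Matrix.adjugate_fin_two]
      simp [Matrix.mul_apply, Fin.sum_univ_two, Matrix.sub_apply]
      ring
    have hM01 : ((N1 * N2).adjugate * ((N3 * N4) - (N1 * N2))) 0 1
        = (N1 * N2) 1 1 * ((N3 * N4) 0 1 - (N1 * N2) 0 1)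
          - (N1 * N2) 0 1 * ((N3 * N4) 1 1 - (N1 * N2) 1 1) := by
      rw [Matrix.adjugate_fin_two]
      simp [Matrix.mul_apply, Fin.sum_univ_two, Matrix.sub_apply]
      ring
    have hM10 : ((N1 * N2).adjugate * ((N3 * N4) - (N1 * N2))) 1 0
        = (N1 * N2) 0 0 * ((N3 * N4) 1 0 - (N1 * N2) 1 0)
          - (N1 * N2) 1 0 * ((N3 * N4) 0 0 - (N1 * N2) 0 0) := by
      rw [Matrix.adjugate_fin_two]
      simp [Matrix.mul_apply, Fin.sum_univ_two, Matrix.sub_apply]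
      ring
    have hM11 : ((N1 * N2).adjugate * ((N3 * N4) - (N1 * N2))) 1 1
        = (N1 * N2) 0 0 * ((N3 * N4) 1 1 - (N1 * N2) 1 1)
          - (N1 * N2) 1 0 * ((N3 * N4) 0 1 - (N1 * N2) 0 1) := by
      rw [Matrix.adjugate_fin_two]
      simp [Matrix.mul_apply, Fin.sum_univ_two, Matrix.sub_apply]
      ring
    have hKK : ∀ (X Y : E), ((at1 + at2 : ℤ):WithTop ℤ) ≤ v X →
        ((at1 + at2 + (2*n + d) : ℤ):WithTop ℤ) ≤ v Y →
        ((m + 1 : ℤ):WithTop ℤ) ≤ v (c * (X * Y)) := by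
      intro X Y hX hY
      have h1 := vmul_ge v hv_mul (le_of_eq hvc.symm) (vmul_ge v hv_mul hX hY)
      refine le_trans ?_ h1
      norm_cast
      omega
    have hKK2 : ∀ (X1 Y1 X2 Y2 : E), ((at1 + at2 : ℤ):WithTop ℤ) ≤ v X1 →
        ((at1 + at2 + (2*n + d) : ℤ):WithTop ℤ) ≤ v Y1 →
        ((at1 + at2 : ℤ):WithTop ℤ) ≤ v X2 →
        ((at1 + at2 + (2*n + d) : ℤ):WithTop ℤ) ≤ v Y2 →
        ((m + 1 : ℤ):WithTop ℤ) ≤ v (c * (X1 * Y1 - X2 * Y2)) := by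
      intro X1 Y1 X2 Y2 h1 h2' h3 h4
      rw [hv_mul]
      calc ((m + 1 : ℤ):WithTop ℤ)
          ≤ ((-(at1+at2) - (at1+at2) : ℤ):WithTop ℤ)
            + ((at1 + at2 + (at1 + at2 + (2*n + d)) : ℤ):WithTop ℤ) := by
            norm_cast <;> omega
      _ ≤ v c + v (X1 * Y1 - X2 * Y2) := by
            refine add_le_add (le_of_eq hvc.symm) ?_
            refine v_sub_ge v hv_add ?_ ?_
            · refine le_trans ?_ (vmul_ge v hv_mul h1 h2'); norm_cast
            · refine le_trans ?_ (vmul_ge v hv_mul h3 h4); norm_cast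
    -- the decomposition of j
    have hjdec := j_decomp c (N1 * N2) (N3 * N4)
    have hmm1 : ((m + 1 : ℤ):WithTop ℤ) ≤ ((2*n + d : ℤ):WithTop ℤ) := by
      norm_cast <;> omega
    simp only [IEr, Set.mem_setOf_eq]
    have hj00 : (c • ((N1 * N2).adjugate * (N3 * N4))) 0 0 - 1
        = (c * (N1 * N2).det - 1)
          + c * (((N1 * N2).adjugate * ((N3 * N4) - (N1 * N2))) 0 0) := by
      rw [hjdec]
      simp [Matrix.add_apply, Matrix.smul_apply, Matrix.one_apply, smul_eq_mul]
      ring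
    have hj11 : (c • ((N1 * N2).adjugate * (N3 * N4))) 1 1 - 1
        = (c * (N1 * N2).det - 1)
          + c * (((N1 * N2).adjugate * ((N3 * N4) - (N1 * N2))) 1 1) := by
      rw [hjdec]
      simp [Matrix.add_apply, Matrix.smul_apply, Matrix.one_apply, smul_eq_mul]
      ring
    have hj01 : (c • ((N1 * N2).adjugate * (N3 * N4))) 0 1
        = c * (((N1 * N2).adjugate * ((N3 * N4) - (N1 * N2))) 0 1) := by
      rw [hjdec]
      simp [Matrix.add_apply, Matrix.smul_apply, Matrix.one_apply, smul_eq_mul]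
    have hj10 : (c • ((N1 * N2).adjugate * (N3 * N4))) 1 0
        = c * (((N1 * N2).adjugate * ((N3 * N4) - (N1 * N2))) 1 0) := by
      rw [hjdec]
      simp [Matrix.add_apply, Matrix.smul_apply, Matrix.one_apply, smul_eq_mul]
    have e1 : ((2*m+1+1)/2 : ℤ) = m + 1 := by omega
    have e2 : ((2*m+1)/2 : ℤ) = m := by omega
    refine ⟨?_, ?_, ?_, ?_⟩
    · rw [e1, hj00]
      refine vadd_ge v hv_add (le_trans hmm1 hlam) ?_
      rw [hM00]
      exact hKK2 _ _ _ _ hbU11 hbW00 hbU01 hbW10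
    · rw [e2, hj01, hM01]
      refine le_trans ?_ (hKK2 _ _ _ _ hbU11 hbW01 hbU01 hbW11)
      norm_cast <;> omega
    · have e3 : ((2*m+1)/2 + 1 : ℤ) = m + 1 := by omega
      rw [e3, hj10, hM10]
      exact hKK2 _ _ _ _ hbU00 hbW10 hbU10 hbW00
    · rw [e1, hj11]
      refine vadd_ge v hv_add (le_trans hmm1 hlam) ?_
      rw [hM11]
      exact hKK2 _ _ _ _ hbU00 hbW11 hbU10 hbW01
  · rw [imat_eq τ ε π n t r hPrne, imat_eq τ ε π n t' u hPune,
      imat_eq τ ε π n (t * t' * (1 + π ^ (2 * n) * r * u)) (r + u) hPrune,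
      imat_eq τ ε π n 1 ρ hPρne]
    rw [← hT, ← hN1, ← hN2, ← hN3, ← hN4]
    refine prod_smul_eq _ _ _ _ _ _ _ _ _ ?_
    rw [Matrix.det_mul, hdet1, hdet2, hc]
    have hfin : ∀ p q x y z w : E, p ≠ 0 → q ≠ 0 → x ≠ 0 → y ≠ 0 → z ≠ 0 → w ≠ 0 →
        z⁻¹ * w⁻¹ * ((p * q * x * y)⁻¹ * (x * y * z * w)) = p⁻¹ * q⁻¹ := by
      intro p q x y z w hp hq hx hy hz hw
      field_simp
    exact hfin _ _ _ _ _ _ hPrne hPune hT0 hτT0 hPrune hPρne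

end ADLV
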